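/- arXiv:1803.04800 — 2 statements merged into one kernel-verified Lean document; each statement's English description precedes it below -/
import Mathlib

section
/- Let τ ≥ 1, let γ₁,…,γ_τ ∈ ℂ be linearly independent over ℚ, let ρᵢⱼ ∈ ℤ (1 ≤ i ≤ τ, 1 ≤ j ≤ n), let Zᵢ be the diagonal linear vector field with components (Zᵢ)ⱼ = √−1·ρᵢⱼ·xⱼ, and let S := Σᵢ γᵢ·Zᵢ. Suppose H ∈ R, H ≠ 0, and c ∈ ℂ satisfy S(H) = c·H. Then for each i = 1,…,τ there exists a unique cᵢ ∈ ℂ such that Zᵢ(H) = cᵢ·H; moreover each cᵢ is √−1 times an integer, and Σᵢ γᵢ·cᵢ = c. -/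
open Finset

noncomputable def psPderiv {n : ℕ} (j : Fin n) (F : MvPowerSeries (Fin n) ℂ) :
    MvPowerSeries (Fin n) ℂ :=
  fun a => ((a j + 1 : ℕ) : ℂ) * MvPowerSeries.coeff (a + Finsupp.single j 1) F

noncomputable def vfApply {n : ℕ} (V : Fin n → MvPowerSeries (Fin n) ℂ)
    (F : MvPowerSeries (Fin n) ℂ) : MvPowerSeries (Fin n) ℂ :=
  ∑ j, V j * psPderiv j F

noncomputable def vfLie {n : ℕ} (U V : Fin n → MvPowerSeries (Fin n) ℂ) :
    Fin n → MvPowerSeries (Fin n) ℂ :=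
  fun j => vfApply U (V j) - vfApply V (U j)

noncomputable def diagVF {n : ℕ} (lam : Fin n → ℂ) : Fin n → MvPowerSeries (Fin n) ℂ :=
  fun j => MvPowerSeries.C (lam j) * MvPowerSeries.X j

def IsPDNormalForm {n : ℕ} (lam : Fin n → ℂ) (Xf : Fin n → MvPowerSeries (Fin n) ℂ) : Prop :=
  (∀ j, MvPowerSeries.coeff 0 (Xf j) = 0) ∧
  (∃ A : Matrix (Fin n) (Fin n) ℂ, IsNilpotent A ∧
      A * Matrix.diagonal lam = Matrix.diagonal lam * A ∧
      ∀ j l, MvPowerSeries.coeff (Finsupp.single l 1) (Xf j)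
        = (if l = j then lam j else 0) + A j l) ∧
  (∀ j, vfLie (diagVF lam) Xf j = 0)

lemma coeff_vfApply_diag {n : ℕ} (μ : Fin n → ℂ)
    (V : Fin n → MvPowerSeries (Fin n) ℂ)
    (hV : ∀ j, V j = MvPowerSeries.C (μ j) * MvPowerSeries.X j)
    (H : MvPowerSeries (Fin n) ℂ) (a : Fin n →₀ ℕ) :
    MvPowerSeries.coeff a (vfApply V H)
      = (∑ j, μ j * (a j : ℂ)) * MvPowerSeries.coeff a H := by
  classical
  unfold vfApply
  rw [map_sum, Finset.sum_mul]
  refine Finset.sum_congr rfl fun j _ => ?_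
  rw [hV, mul_assoc, MvPowerSeries.coeff_C_mul, MvPowerSeries.X_def,
    MvPowerSeries.coeff_monomial_mul]
  by_cases h : Finsupp.single j 1 ≤ a
  · rw [if_pos h, one_mul]
    set b : Fin n →₀ ℕ := a - Finsupp.single j 1 with hb
    have h1 : 1 ≤ a j := by simpa using Finsupp.single_le_iff.mp h
    have h2 : b + Finsupp.single j 1 = a := tsub_add_cancel_of_le h
    have h3 : b j + 1 = a j := by
      rw [hb, Finsupp.tsub_apply, Finsupp.single_apply, if_pos rfl]
      omega
    have hps : MvPowerSeries.coeff b (psPderiv j H)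
        = ((b j + 1 : ℕ) : ℂ) * MvPowerSeries.coeff (b + Finsupp.single j 1) H := by
      rw [MvPowerSeries.coeff_apply]; rfl
    rw [hps, h2, h3]
    ring
  · rw [if_neg h, mul_zero]
    have ha : a j = 0 := by
      by_contra hne
      exact h (Finsupp.single_le_iff.mpr (by omega))
    rw [ha]
    simp

/-- If `Z i` are the diagonal linear vector fields with components `√-1·ρ i j·x j`,
`γ i` are linearly independent over `ℚ`, `S = Σ γ i • Z i`, and `H ≠ 0` satisfies
`S(H) = c·H`, then for each `i` there is a unique `c i` with `Z i (H) = c i • H`;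
moreover each `c i` is `√-1` times an integer and `Σ γ i · c i = c`. -/
theorem eigen_of_torus_generators {n τ : ℕ} (hτ : 1 ≤ τ)
    (γ : Fin τ → ℂ) (hγ : LinearIndependent ℚ γ)
    (ρ : Fin τ → Fin n → ℤ)
    (Z : Fin τ → Fin n → MvPowerSeries (Fin n) ℂ)
    (hZ : ∀ i j, Z i j
      = MvPowerSeries.C (Complex.I * (ρ i j : ℂ)) * MvPowerSeries.X j)
    (S : Fin n → MvPowerSeries (Fin n) ℂ)
    (hS : ∀ j, S j = ∑ i, MvPowerSeries.C (γ i) * Z i j)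
    (H : MvPowerSeries (Fin n) ℂ) (hH : H ≠ 0) (c : ℂ)
    (hc : vfApply S H = MvPowerSeries.C c * H) :
    (∀ i, ∃! ci : ℂ, vfApply (Z i) H = MvPowerSeries.C ci * H) ∧
    ∃ cv : Fin τ → ℂ,
      (∀ i, vfApply (Z i) H = MvPowerSeries.C (cv i) * H) ∧
      (∀ i, ∃ k : ℤ, cv i = Complex.I * (k : ℂ)) ∧
      ∑ i, γ i * cv i = c := by
  classical
  set w : Fin τ → (Fin n →₀ ℕ) → ℤ := fun i a => ∑ j, ρ i j * (a j : ℤ) with hw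
  have hZcoeff : ∀ i a, MvPowerSeries.coeff a (vfApply (Z i) H)
      = Complex.I * (w i a : ℂ) * MvPowerSeries.coeff a H := by
    intro i a
    rw [coeff_vfApply_diag (fun j => Complex.I * (ρ i j : ℂ)) (Z i) (hZ i) H a]
    congr 1
    rw [hw]
    push_cast
    rw [Finset.mul_sum]
    exact Finset.sum_congr rfl fun j _ => by ring
  have hScoeff : ∀ a, MvPowerSeries.coeff a (vfApply S H)
      = (∑ i, γ i * (Complex.I * (w i a : ℂ))) * MvPowerSeries.coeff a H := by
    intro a
    have hSform : ∀ j, S j = MvPowerSeries.C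
        (∑ i, γ i * (Complex.I * (ρ i j : ℂ))) * MvPowerSeries.X j := by
      intro j
      rw [hS, map_sum, Finset.sum_mul]
      exact Finset.sum_congr rfl fun i _ => by rw [hZ, ← mul_assoc, ← map_mul]
    rw [coeff_vfApply_diag _ S hSform H a]
    congr 1
    rw [hw]
    push_cast
    simp only [Finset.sum_mul, Finset.mul_sum]
    rw [Finset.sum_comm]
    exact Finset.sum_congr rfl fun i _ => Finset.sum_congr rfl fun j _ => by ring
  have eq0 : ∀ a, MvPowerSeries.coeff a H ≠ 0 →
      ∑ i, γ i * (Complex.I * (w i a : ℂ)) = c := by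
    intro a ha
    have h1 := congrArg (MvPowerSeries.coeff a) hc
    rw [hScoeff, MvPowerSeries.coeff_C_mul] at h1
    exact mul_right_cancel₀ ha h1
  obtain ⟨a0, ha0⟩ : ∃ a, MvPowerSeries.coeff a H ≠ 0 := by
    by_contra h
    push_neg at h
    exact hH (MvPowerSeries.ext h)
  have key : ∀ a, MvPowerSeries.coeff a H ≠ 0 → ∀ i, w i a = w i a0 := by
    intro a ha i
    have hdiff : ∑ i, γ i * ((w i a - w i a0 : ℤ) : ℂ) = 0 := by
      have h1 := eq0 a ha
      have h2 := eq0 a0 ha0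
      have h3 : ∑ i, γ i * (Complex.I * (w i a : ℂ))
          - ∑ i, γ i * (Complex.I * (w i a0 : ℂ)) = 0 := by rw [h1, h2, sub_self]
      rw [← Finset.sum_sub_distrib] at h3
      have h4 : ∑ i, Complex.I * (γ i * ((w i a - w i a0 : ℤ) : ℂ))
          = 0 := by
        rw [← h3]
        exact Finset.sum_congr rfl fun i _ => by push_cast; ring
      rw [← Finset.mul_sum] at h4
      exact (mul_eq_zero.mp h4).resolve_left Complex.I_ne_zero
    have hli := Fintype.linearIndependent_iff.mp hγ
        (fun i => ((w i a - w i a0 : ℤ) : ℚ)) ?_ i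
    · have h5 : ((w i a - w i a0 : ℤ) : ℚ) = 0 := hli
      have h6 : (w i a - w i a0 : ℤ) = 0 := by exact_mod_cast h5
      omega
    · rw [← hdiff]
      refine Finset.sum_congr rfl fun i _ => ?_
      rw [Rat.smul_def]
      push_cast
      ring
  set cv : Fin τ → ℂ := fun i => Complex.I * (w i a0 : ℂ) with hcv
  have heig : ∀ i, vfApply (Z i) H = MvPowerSeries.C (cv i) * H := by
    intro i
    ext a
    rw [hZcoeff, MvPowerSeries.coeff_C_mul]
    by_cases ha : MvPowerSeries.coeff a H = 0
    · rw [ha, mul_zero, mul_zero]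
    · rw [key a ha i]
  constructor
  · intro i
    refine ⟨cv i, heig i, fun y hy => ?_⟩
    have h1 := congrArg (MvPowerSeries.coeff a0) hy
    have h2 := congrArg (MvPowerSeries.coeff a0) (heig i)
    rw [MvPowerSeries.coeff_C_mul] at h1 h2
    exact mul_right_cancel₀ ha0 (h1.symm.trans h2)
  · refine ⟨cv, heig, fun i => ⟨w i a0, rfl⟩, ?_⟩
    rw [← eq0 a0 ha0]
end

section
/- Let B = B(0,r) be an open ball centered at 0 in ℂⁿ, let X' : B → ℂⁿ and H : B → ℂ be holomorphic with H not identically zero, and let S ⊆ B be a closed set with 0 ∈ S containing the zero set {z ∈ B : H(z) = 0}. Suppose there exist D ∈ ℕ and δ > 0 such that |H(z)| ≥ dist(z,S)^D for all z with ‖z‖ < δ. Let ν, m ∈ ℕ, set μ := ν + 2 + 2Dm, and let Z : B → ℂⁿ be a holomorphic vector field such that the holomorphic vector field W := (dH·Z)·X' − H·[Z,X'] vanishes to order at least μ − 1 at 0, i.e., the Taylor expansion of W at 0 contains no terms of degree less than μ − 1. Then there exists ε > 0 such that for every z with ‖z‖ ≤ ε and dist(z,S) ≥ ‖z‖^m one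 has ‖W(z)‖ ≤ |H(z)|²·‖z‖^ν (equivalently, the bracket of Z with the rational vector field X'/H satisfies ‖[Z, X'/H](z)‖ ≤ ‖z‖^ν at such points). -/
open Metric

/-- Applying an analytic family of continuous linear maps to an analytic vector field
is analytic. -/
lemma clm_apply_analyticAt {n : ℕ} {F : Type} [NormedAddCommGroup F] [NormedSpace ℂ F]
    {g : (Fin n → ℂ) → ((Fin n → ℂ) →L[ℂ] F)} {Z : (Fin n → ℂ) → (Fin n → ℂ)}
    {x : Fin n → ℂ} (hg : AnalyticAt ℂ g x) (hZ : AnalyticAt ℂ Z x) :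
    AnalyticAt ℂ (fun z => g z (Z z)) x :=
  ((ContinuousLinearMap.apply ℂ F).analyticAt_bilinear (Z x, g x)).comp₂ hZ hg

/-- Near-invariance estimate: if `W = (dH·Z)·X' − H·[Z,X']` vanishes to order at least
`μ − 1 = ν + 1 + 2Dm` at `0`, and the Łojasiewicz inequality `|H(z)| ≥ dist(z,S)^D` holds
near `0`, then outside the horn `{dist(z,S) < ‖z‖^m}` and for `‖z‖` small enough one has
`‖W(z)‖ ≤ |H(z)|²·‖z‖^ν`, i.e. `‖[Z, X'/H](z)‖ ≤ ‖z‖^ν`. -/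
theorem near_invariance_estimate {n : ℕ} (r : ℝ) (hr : 0 < r)
    (X' : (Fin n → ℂ) → (Fin n → ℂ)) (H : (Fin n → ℂ) → ℂ)
    (hX' : AnalyticOnNhd ℂ X' (ball (0 : Fin n → ℂ) r))
    (hH : AnalyticOnNhd ℂ H (ball (0 : Fin n → ℂ) r))
    (hHnz : ¬ ∀ z ∈ ball (0 : Fin n → ℂ) r, H z = 0)
    (S : Set (Fin n → ℂ)) (hScl : IsClosed S) (hSB : S ⊆ ball (0 : Fin n → ℂ) r)
    (h0S : (0 : Fin n → ℂ) ∈ S)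
    (hzeroS : {z ∈ ball (0 : Fin n → ℂ) r | H z = 0} ⊆ S)
    (D : ℕ) (δ : ℝ) (hδ : 0 < δ)
    (hLoj : ∀ z : Fin n → ℂ, ‖z‖ < δ → infDist z S ^ D ≤ ‖H z‖)
    (ν m : ℕ) (μ : ℕ) (hμ : μ = ν + 2 + 2 * D * m)
    (Z : (Fin n → ℂ) → (Fin n → ℂ)) (hZ : AnalyticOnNhd ℂ Z (ball (0 : Fin n → ℂ) r))
    (W : (Fin n → ℂ) → (Fin n → ℂ))
    (hW : W = fun z => (fderiv ℂ H z (Z z)) • X' z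
        - H z • (fderiv ℂ X' z (Z z) - fderiv ℂ Z z (X' z)))
    (hvanish : ∀ j : ℕ, j < μ - 1 → iteratedFDeriv ℂ j W 0 = 0) :
    ∃ ε > 0, ∀ z : Fin n → ℂ, ‖z‖ ≤ ε → ‖z‖ ^ m ≤ infDist z S →
      ‖W z‖ ≤ ‖H z‖ ^ 2 * ‖z‖ ^ ν := by
  have h0mem : (0 : Fin n → ℂ) ∈ ball (0 : Fin n → ℂ) r := mem_ball_self hr
  -- W is analytic at 0
  have hWa : AnalyticAt ℂ W 0 := by
    rw [hW]
    have h1 : AnalyticAt ℂ (fun z => fderiv ℂ H z (Z z)) 0 :=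
      clm_apply_analyticAt (hH.fderiv 0 h0mem) (hZ 0 h0mem)
    have h2 : AnalyticAt ℂ (fun z => fderiv ℂ X' z (Z z)) 0 :=
      clm_apply_analyticAt (hX'.fderiv 0 h0mem) (hZ 0 h0mem)
    have h3 : AnalyticAt ℂ (fun z => fderiv ℂ Z z (X' z)) 0 :=
      clm_apply_analyticAt (hZ.fderiv 0 h0mem) (hX' 0 h0mem)
    exact (h1.smul (hX' 0 h0mem)).sub ((hH 0 h0mem).smul (h2.sub h3))
  obtain ⟨p, hp⟩ := hWa
  -- the partial sum of order μ - 1 vanishes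
  have hps : ∀ y : Fin n → ℂ, p.partialSum (μ - 1) y = 0 := by
    intro y
    obtain ⟨R, hR⟩ := hp
    have : ∀ j ∈ Finset.range (μ - 1), p j (fun _ => y) = 0 := by
      intro j hj
      have hfac := hR.factorial_smul y j
      rw [hvanish j (Finset.mem_range.mp hj)] at hfac
      simp only [ContinuousMultilinearMap.zero_apply] at hfac
      have h2 : (j.factorial : ℂ) • ((p j) fun _ => y) = 0 := by
        rw [Nat.cast_smul_eq_nsmul]; exact hfac
      rcases smul_eq_zero.mp h2 with h | h
      · exact absurd h (by exact_mod_cast j.factorial_ne_zero)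
      · exact h
    show (∑ k ∈ Finset.range (μ - 1), p k fun _ => y) = 0
    exact Finset.sum_eq_zero this
  -- big-O bound for W
  have hbig := hp.isBigO_sub_partialSum_pow (μ - 1)
  simp only [zero_add, hps, sub_zero] at hbig
  obtain ⟨C, hC⟩ := (Asymptotics.isBigO_iff.mp hbig)
  obtain ⟨ε₀, hε₀, hCb⟩ := Metric.eventually_nhds_iff.mp hC
  set C' : ℝ := max C 1 with hC'def
  have hC'1 : (1 : ℝ) ≤ C' := le_max_right _ _
  have hC'0 : (0 : ℝ) < C' := lt_of_lt_of_le one_pos hC'1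
  refine ⟨min (min (ε₀ / 2) (δ / 2)) (1 / C'), by positivity, ?_⟩
  intro z hzε hm
  have hz0 : (0 : ℝ) ≤ ‖z‖ := norm_nonneg z
  have hzε₀ : ‖z‖ < ε₀ :=
    lt_of_le_of_lt (hzε.trans ((min_le_left _ _).trans (min_le_left _ _))) (by linarith)
  have hzδ : ‖z‖ < δ :=
    lt_of_le_of_lt (hzε.trans ((min_le_left _ _).trans (min_le_right _ _))) (by linarith)
  have hzC : C' * ‖z‖ ≤ 1 := by
    have h1 : ‖z‖ ≤ 1 / C' := hzε.trans (min_le_right _ _)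
    calc C' * ‖z‖ ≤ C' * (1 / C') := by
          exact mul_le_mul_of_nonneg_left h1 hC'0.le
      _ = 1 := by field_simp
  -- bound on W
  have hWb : ‖W z‖ ≤ C' * ‖z‖ ^ (μ - 1) := by
    have := hCb (show dist z 0 < ε₀ by simpa using hzε₀)
    simp only [Real.norm_eq_abs, abs_pow, abs_norm] at this
    calc ‖W z‖ ≤ C * ‖z‖ ^ (μ - 1) := this
      _ ≤ C' * ‖z‖ ^ (μ - 1) := by
          exact mul_le_mul_of_nonneg_right (le_max_left _ _) (by positivity)
  -- lower bound on |H z|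
  have hHb : ‖z‖ ^ (m * D) ≤ ‖H z‖ := by
    calc ‖z‖ ^ (m * D) = (‖z‖ ^ m) ^ D := by rw [pow_mul]
      _ ≤ infDist z S ^ D := pow_le_pow_left₀ (by positivity) hm D
      _ ≤ ‖H z‖ := hLoj z hzδ
  have hexp : μ - 1 = ν + 2 * D * m + 1 := by omega
  calc ‖W z‖ ≤ C' * ‖z‖ ^ (μ - 1) := hWb
    _ = (C' * ‖z‖) * (‖z‖ ^ (ν + 2 * D * m)) := by
        rw [hexp, pow_succ]; ring
    _ ≤ 1 * ‖z‖ ^ (ν + 2 * D * m) := by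
        exact mul_le_mul_of_nonneg_right hzC (by positivity)
    _ = (‖z‖ ^ (m * D)) ^ 2 * ‖z‖ ^ ν := by
        rw [← pow_mul, ← pow_add]; ring_nf
    _ ≤ ‖H z‖ ^ 2 * ‖z‖ ^ ν := by
        have := pow_le_pow_left₀ (by positivity) hHb 2
        exact mul_le_mul_of_nonneg_right this (by positivity)
end
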